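/- Let κ > 0. The quadratic equation 2μP_xΔ_0Δ_L·ω² + (8ακΔ_0Δ_Q/√(2π))·ω − (2μ²P_xP_vΔ_0 + 4α²κ²Δ_Q + κ²Δ'_0G) = 0 has a unique positive real root ω, and for this root ω one has the identity (2(L−Q)Δ_0/Δ_Q)·ω² + QμP_v/Δ_Q + κ²Δ'_0G/(μ²P_x²Δ_Q) = μP_vL/Δ_L + β_1κ² − β_2·κ·√(κ² + β_3). (This is the closed-form steady-state mean square deviation of l_0-LMS, Theorem 1.) -/

import Mathlib

set_option maxHeartbeats 2000000 in
set_option maxRecDepth 10000 in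
/-- Theorem 1 of "Performance Analysis of $l_0$ Norm Constraint Least Mean Square
Algorithm": the quadratic equation defining the steady-state zero-tap variance ω has a
unique positive root, and the steady-state MSD expressed via ω equals the closed form
`μ P_v L / Δ_L + β₁ κ² − β₂ κ √(κ² + β₃)`. -/
theorem l0LMS_steady_state_MSD
    (L Q μ Px Pv α G κ : ℝ)
    (hL : 1 ≤ L) (hQ0 : 0 ≤ Q) (hQL : Q ≤ L)
    (hμ : 0 < μ) (hPx : 0 < Px) (hPv : 0 < Pv) (hα : 0 < α) (hG : 0 ≤ G)
    (hstab : (L + 2) * μ * Px < 2) (hκ : 0 < κ)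
    (ΔL ΔQ Δ0 Δ0' β0 β1 β2 β3 : ℝ)
    (hΔL : ΔL = 2 - (L + 2) * μ * Px)
    (hΔQ : ΔQ = 2 - (Q + 2) * μ * Px)
    (hΔ0 : Δ0 = 1 - μ * Px)
    (hΔ0' : Δ0' = 2 - μ * Px)
    (hβ0 : β0 = μ * Px * Δ0' * ΔL * G + 4 * α ^ 2 * ΔQ * (μ * Px * ΔL + Δ0 * ΔQ / Real.pi))
    (hβ1 : β1 = (Δ0' * G + 4 * (L - Q) * α ^ 2 * (μ * Px + 2 * Δ0 * ΔQ / (Real.pi * ΔL)))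
        / (μ ^ 2 * Px ^ 2 * ΔL))
    (hβ2 : β2 = (4 * α * (L - Q) / (μ ^ 2 * Px ^ 2 * ΔL ^ 2)) * Real.sqrt (Δ0 * β0 / Real.pi))
    (hβ3 : β3 = 2 * μ ^ 3 * Px ^ 2 * Pv * Δ0 * ΔL / β0) :
    (∃! ω : ℝ, 0 < ω ∧
      2 * μ * Px * Δ0 * ΔL * ω ^ 2 + (8 * α * κ * Δ0 * ΔQ / Real.sqrt (2 * Real.pi)) * ω
        - (2 * μ ^ 2 * Px * Pv * Δ0 + 4 * α ^ 2 * κ ^ 2 * ΔQ + κ ^ 2 * Δ0' * G) = 0) ∧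
    (∀ ω : ℝ, 0 < ω →
      2 * μ * Px * Δ0 * ΔL * ω ^ 2 + (8 * α * κ * Δ0 * ΔQ / Real.sqrt (2 * Real.pi)) * ω
        - (2 * μ ^ 2 * Px * Pv * Δ0 + 4 * α ^ 2 * κ ^ 2 * ΔQ + κ ^ 2 * Δ0' * G) = 0 →
      (2 * (L - Q) * Δ0 / ΔQ) * ω ^ 2 + Q * μ * Pv / ΔQ
          + κ ^ 2 * Δ0' * G / (μ ^ 2 * Px ^ 2 * ΔQ)
        = μ * Pv * L / ΔL + β1 * κ ^ 2 - β2 * κ * Real.sqrt (κ ^ 2 + β3)) := by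
  have hπ : (0:ℝ) < Real.pi := Real.pi_pos
  have hμPx : 0 < μ * Px := mul_pos hμ hPx
  have hΔLpos : 0 < ΔL := by rw [hΔL]; linarith
  have hΔQpos : 0 < ΔQ := by rw [hΔQ]; nlinarith
  have hΔ0pos : 0 < Δ0 := by rw [hΔ0]; nlinarith
  have hΔ0'pos : 0 < Δ0' := by rw [hΔ0']; nlinarith
  have hβ0pos : 0 < β0 := by
    rw [hβ0]
    have t1 : 0 ≤ μ * Px * Δ0' * ΔL * G :=
      mul_nonneg (by positivity) hG
    have t2 : 0 < 4 * α ^ 2 * ΔQ * (μ * Px * ΔL + Δ0 * ΔQ / Real.pi) := by positivity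
    linarith
  set s := Real.sqrt (2 * Real.pi) with hsdef
  have hs2 : s ^ 2 = 2 * Real.pi := Real.sq_sqrt (by positivity)
  have hspos : 0 < s := Real.sqrt_pos.mpr (by positivity)
  set a := 2 * μ * Px * Δ0 * ΔL with hadef
  set b := 8 * α * κ * Δ0 * ΔQ / s with hbdef
  set c := 2 * μ ^ 2 * Px * Pv * Δ0 + 4 * α ^ 2 * κ ^ 2 * ΔQ + κ ^ 2 * Δ0' * G with hcdef
  have hapos : 0 < a := by positivity
  have hbpos : 0 < b := by positivity
  have hcpos : 0 < c := by positivity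
  set D := b ^ 2 + 4 * a * c with hDdef
  have hDpos : 0 < D := by positivity
  set r := Real.sqrt D with hrdef
  have hr2 : r ^ 2 = D := Real.sq_sqrt hDpos.le
  have hrpos : 0 < r := Real.sqrt_pos.mpr hDpos
  have hrb : b < r := by
    refine lt_of_pow_lt_pow_left₀ 2 hrpos.le ?_
    rw [hr2, hDdef]; nlinarith [mul_pos hapos hcpos]

  -- key: every positive root satisfies 2*a*ω + b = r
  have key : ∀ ω : ℝ, 0 < ω → a * ω ^ 2 + b * ω - c = 0 → r = 2 * a * ω + b := by
    intro ω hω hq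
    have h1 : (2 * a * ω + b) ^ 2 = D := by rw [hDdef]; linear_combination 4 * a * hq
    rw [hrdef, ← h1, Real.sqrt_sq (by positivity)]
  have hβ3pos : 0 < β3 := by rw [hβ3]; positivity
  -- D in terms of β0, β3
  have hDval : D = 8 * Δ0 * β0 * (κ ^ 2 + β3) := by
    have e2 : 8 * Δ0 * β0 * (κ ^ 2 + β3) = 8 * Δ0 * β0 * κ ^ 2 + 16 * μ ^ 3 * Px ^ 2 * Pv * Δ0 ^ 2 * ΔL := by
      rw [hβ3]; field_simp; ring
    rw [e2, hDdef, hbdef, hadef, hcdef, hβ0]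
    field_simp
    linear_combination (-32 * α ^ 2 * κ ^ 2 * Δ0 * ΔQ ^ 2) * hs2
  -- sqrt combination
  have hsqrtcomb : Real.sqrt (Δ0 * β0 / Real.pi) * Real.sqrt (κ ^ 2 + β3) = r / (2 * s) := by
    have hx : Δ0 * β0 / Real.pi * (κ ^ 2 + β3) = D / (8 * Real.pi) := by
      rw [hDval]; field_simp
    have h8s : Real.sqrt (8 * Real.pi) = 2 * s := by
      have h82 : (8 : ℝ) * Real.pi = 2 ^ 2 * (2 * Real.pi) := by ring
      rw [h82, Real.sqrt_mul (by positivity), Real.sqrt_sq (by norm_num : (0:ℝ) ≤ 2), hsdef]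
    calc Real.sqrt (Δ0 * β0 / Real.pi) * Real.sqrt (κ ^ 2 + β3)
        = Real.sqrt (Δ0 * β0 / Real.pi * (κ ^ 2 + β3)) :=
          (Real.sqrt_mul (le_of_lt (div_pos (mul_pos hΔ0pos hβ0pos) hπ)) _).symm
      _ = Real.sqrt (D / (8 * Real.pi)) := by rw [hx]
      _ = Real.sqrt D / Real.sqrt (8 * Real.pi) := Real.sqrt_div hDpos.le _
      _ = r / (2 * s) := by rw [h8s, hrdef]
  constructor
  · refine ⟨(r - b) / (2 * a), ⟨div_pos (by linarith) (by positivity), ?_⟩, ?_⟩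
    · have hx : 2 * a * ((r - b) / (2 * a)) + b = r := by field_simp; ring
      have h4 : 4 * a * (a * ((r - b) / (2 * a)) ^ 2 + b * ((r - b) / (2 * a)) - c) = 0 := by
        linear_combination (2 * a * ((r - b) / (2 * a)) + b + r) * hx + hr2 + hDdef
      exact (mul_eq_zero.mp h4).resolve_left (by positivity)
    · rintro y ⟨hy, hyq⟩
      have hk := key y hy hyq
      field_simp
      linarith
  · intro ω hω hq
    have hsum := key ω hω hq
    have hrw : β2 * κ * Real.sqrt (κ ^ 2 + β3)
        = (2 * α * κ * (L - Q) / (μ ^ 2 * Px ^ 2 * ΔL ^ 2 * s)) * (2 * a * ω + b) := by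
      have e : β2 * κ * Real.sqrt (κ ^ 2 + β3)
          = (4 * α * (L - Q) / (μ ^ 2 * Px ^ 2 * ΔL ^ 2)) * κ
            * (Real.sqrt (Δ0 * β0 / Real.pi) * Real.sqrt (κ ^ 2 + β3)) := by
        rw [hβ2]; ring
      rw [e, hsqrtcomb, hsum]
      field_simp
      ring
    rw [hrw, hβ1]
    have hπeq : Real.pi = s ^ 2 / 2 := by linarith
    rw [hπeq]
    have hq' : a * ω ^ 2 + b * ω - c = 0 := hq
    rw [hbdef] at hq'
    have hq2 : a * ω ^ 2 * s + 8 * α * κ * Δ0 * ΔQ * ω - c * s = 0 := by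
      field_simp at hq'
      linarith [hq']
    rw [hadef, hcdef] at hq2
    rw [hbdef, hadef]
    field_simp
    linear_combination ((L - Q) * μ * Px * ΔL * s) * hq2
      + (Q * μ ^ 3 * Pv * Px ^ 2 * ΔL * s ^ 2
          + κ ^ 2 * Δ0' * G * ΔL * s ^ 2) * hΔL
      + (-(L * μ ^ 3 * Pv * Px ^ 2 * ΔL * s ^ 2)
          - κ ^ 2 * Δ0' * G * ΔL * s ^ 2) * hΔQ
      + (2 * (L - Q) * μ ^ 3 * Pv * Px ^ 2 * ΔL * s ^ 2) * hΔ0
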